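/- Let (Ω, 𝔉, P) be a probability space, α ∈ [0,1], and β : Ω → ℝ a Bernoulli random variable with parameter α. Let e, w : Ω → ℝⁿ and v, v₋ : Ω → ℝᵐ be square-integrable random vectors with E[e] = 0, E[w] = 0, E[v] = 0, E[v₋] = 0, second moments E[e eᵀ] = Σ, E[w wᵀ] = Q, cross moments E[e wᵀ] = Q, E[e vᵀ] = 0, E[e v₋ᵀ] = 0, and suppose β is independent of the tuple (e, w, v, v₋). Let C and θ be m×n matrices, x̂ ∈ ℝⁿ a fixed vector, and define x := x̂ + e and y := (1−β)(C x + v) + β(θ(x − w) + v₋). Then the cross covariance satisfies: E[(x − x̂)(y − E y)ᵀ] = Σ((1−α)C + α θ)ᵀ − α Q θᵀ. -/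

import Mathlib

open MeasureTheory Matrix ProbabilityTheory

noncomputable def crossMoment {Ω : Type*} [MeasurableSpace Ω] (P : Measure Ω)
    {d₁ d₂ : ℕ} (u : Ω → (Fin d₁ → ℝ)) (z : Ω → (Fin d₂ → ℝ)) :
    Matrix (Fin d₁) (Fin d₂) ℝ :=
  Matrix.of fun i j => ∫ ω, u ω i * z ω j ∂P

section aux
variable {Ω : Type*} [MeasurableSpace Ω] {P : Measure Ω} [IsProbabilityMeasure P]

lemma aux_mul_int {f g : Ω → ℝ} (hf : MemLp f 2 P) (hg : MemLp g 2 P) :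
    Integrable (fun ω => f ω * g ω) P := by
  have h : MemLp (f • g) 1 P := hg.smul hf
  exact h.integrable le_rfl

omit [IsProbabilityMeasure P] in
lemma aux_proj {d : ℕ} {f : Ω → Fin d → ℝ} (hf : MemLp f 2 P) (i : Fin d) :
    MemLp (fun ω => f ω i) 2 P :=
  (ContinuousLinearMap.proj (R := ℝ) (φ := fun _ : Fin d => ℝ) i).comp_memLp' hf

omit [IsProbabilityMeasure P] in
lemma aux_mulVec {d d' : ℕ} (M : Matrix (Fin d') (Fin d) ℝ) {f : Ω → Fin d → ℝ}
    (hf : MemLp f 2 P) : MemLp (fun ω => M.mulVec (f ω)) 2 P := by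
  simpa [Matrix.mulVecLin_apply, Function.comp_def] using
    (LinearMap.toContinuousLinearMap (Matrix.mulVecLin M)).comp_memLp' hf

omit [IsProbabilityMeasure P] in
lemma aux_int_proj {d : ℕ} {f : Ω → Fin d → ℝ} (hf : Integrable f P) (i : Fin d) :
    ∫ ω, f ω i ∂P = (∫ ω, f ω ∂P) i := by
  simpa using
    ((ContinuousLinearMap.proj (R := ℝ) (φ := fun _ : Fin d => ℝ) i).integral_comp_comm hf)

omit [IsProbabilityMeasure P] in
lemma aux_meas_mulVec {γ : Type*} [MeasurableSpace γ] {d d' : ℕ}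
    (M : Matrix (Fin d') (Fin d) ℝ) {g : γ → Fin d → ℝ} (hg : Measurable g) :
    Measurable (fun s => M.mulVec (g s)) := by
  have := ((LinearMap.toContinuousLinearMap
    (Matrix.mulVecLin M)).continuous.measurable).comp hg
  simpa [Matrix.mulVecLin_apply, Function.comp_def] using this

end aux

/-- Cross covariance between the state and the randomly
one-step-delayed measurement. -/
theorem delayed_measurement_cross_covariance (n m : ℕ)
    {Ω : Type*} [MeasurableSpace Ω] (P : Measure Ω) [IsProbabilityMeasure P]
    (α : ℝ) (hα0 : 0 ≤ α) (hα1 : α ≤ 1)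
    (β : Ω → ℝ) (hβmeas : Measurable β)
    (hβ01 : ∀ ω, β ω = 0 ∨ β ω = 1)
    (hβα : P {ω | β ω = 1} = ENNReal.ofReal α)
    (e w : Ω → (Fin n → ℝ)) (v vm : Ω → (Fin m → ℝ))
    (hemeas : Measurable e) (hwmeas : Measurable w)
    (hvmeas : Measurable v) (hvmmeas : Measurable vm)
    (he2 : MemLp e 2 P) (hw2 : MemLp w 2 P)
    (hv2 : MemLp v 2 P) (hvm2 : MemLp vm 2 P)
    (hezero : (∫ ω, e ω ∂P) = 0) (hwzero : (∫ ω, w ω ∂P) = 0)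
    (hvzero : (∫ ω, v ω ∂P) = 0) (hvmzero : (∫ ω, vm ω ∂P) = 0)
    (Sig Q : Matrix (Fin n) (Fin n) ℝ)
    (hee : crossMoment P e e = Sig) (hww : crossMoment P w w = Q)
    (hew : crossMoment P e w = Q)
    (hev : crossMoment P e v = 0) (hevm : crossMoment P e vm = 0)
    (hindep : IndepFun β (fun ω => (e ω, w ω, v ω, vm ω)) P)
    (C θ : Matrix (Fin m) (Fin n) ℝ) (xhat : Fin n → ℝ)
    (x : Ω → (Fin n → ℝ)) (hx : x = fun ω => xhat + e ω)
    (y : Ω → (Fin m → ℝ))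
    (hy : y = fun ω => (1 - β ω) • (C.mulVec (x ω) + v ω)
                      + β ω • (θ.mulVec (x ω - w ω) + vm ω)) :
    crossMoment P (fun ω => x ω - xhat) (fun ω => y ω - ∫ ω', y ω' ∂P) =
      Sig * ((1 - α) • C + α • θ)ᵀ - α • (Q * θᵀ) := by
  subst hx hy
  -- basic facts about β
  have hβset : MeasurableSet {ω | β ω = 1} := hβmeas (measurableSet_singleton 1)
  have hβind : β = Set.indicator {ω | β ω = 1} (fun _ => (1:ℝ)) := by
    funext ω; rcases hβ01 ω with h | h <;>
      simp [Set.indicator_apply, h]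
  have hβint : Integrable β P := by
    rw [hβind]; exact (integrable_const (1:ℝ)).indicator hβset
  have hβE : ∫ ω, β ω ∂P = α := by
    conv_lhs => rw [hβind]
    rw [integral_indicator_const (1:ℝ) hβset, measureReal_def, hβα, ENNReal.toReal_ofReal hα0, smul_eq_mul,
      mul_one]
  have hβbd : ∀ ω, ‖β ω‖ ≤ 1 := by
    intro ω; rcases hβ01 ω with h | h <;> simp [h]
  have h1βbd : ∀ ω, ‖1 - β ω‖ ≤ 1 := by
    intro ω; rcases hβ01 ω with h | h <;> simp [h]
  have h1βE : ∫ ω, (1 - β ω) ∂P = 1 - α := by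
    rw [integral_sub (integrable_const 1) hβint, hβE]; simp
  -- second moment entries
  have hSigE : ∀ i k, (∫ ω, e ω i * e ω k ∂P) = Sig i k := fun i k => by rw [← hee]; rfl
  have hQE : ∀ i k, (∫ ω, e ω i * w ω k ∂P) = Q i k := fun i k => by rw [← hew]; rfl
  have hevE : ∀ i j, (∫ ω, e ω i * v ω j ∂P) = 0 := fun i j => by
    have : (∫ ω, e ω i * v ω j ∂P) = crossMoment P e v i j := rfl
    rw [this, hev]; rfl
  have hevmE : ∀ i j, (∫ ω, e ω i * vm ω j ∂P) = 0 := fun i j => by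
    have : (∫ ω, e ω i * vm ω j ∂P) = crossMoment P e vm i j := rfl
    rw [this, hevm]; rfl
  have heiE : ∀ i, (∫ ω, e ω i ∂P) = 0 := fun i => by
    rw [aux_int_proj (he2.integrable one_le_two) i, hezero]; rfl
  -- tuple measurability
  have hT : Measurable (fun ω => (e ω, w ω, v ω, vm ω)) :=
    hemeas.prodMk (hwmeas.prodMk (hvmeas.prodMk hvmmeas))
  -- MemLp of the two measurement pieces, componentwise
  have hA2 : ∀ j, MemLp (fun ω => (C.mulVec (xhat + e ω) + v ω) j) 2 P := by
    intro j
    have hfun : (fun ω => (C.mulVec (xhat + e ω) + v ω) j)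
        = fun ω => C.mulVec xhat j + (C.mulVec (e ω) j + v ω j) := by
      funext ω; simp [Matrix.mulVec_add]; ring
    rw [hfun]
    exact (memLp_const (C.mulVec xhat j)).add ((aux_proj (aux_mulVec C he2) j).add (aux_proj hv2 j))
  have hB2 : ∀ j, MemLp (fun ω => (θ.mulVec (xhat + e ω - w ω) + vm ω) j) 2 P := by
    intro j
    have hfun : (fun ω => (θ.mulVec (xhat + e ω - w ω) + vm ω) j)
        = fun ω => θ.mulVec xhat j + ((θ.mulVec (e ω) j - θ.mulVec (w ω) j) + vm ω j) := by
      funext ω; simp [Matrix.mulVec_add, Matrix.mulVec_sub]; ring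
    rw [hfun]
    exact (memLp_const (θ.mulVec xhat j)).add (((aux_proj (aux_mulVec θ he2) j).sub
      (aux_proj (aux_mulVec θ hw2) j)).add (aux_proj hvm2 j))
  -- measurability of the scalar products as functions of the tuple
  have hψA : ∀ (i : Fin n) (j : Fin m),
      Measurable (fun s : (Fin n → ℝ) × ((Fin n → ℝ) × ((Fin m → ℝ) × (Fin m → ℝ))) =>
        s.1 i * ((C.mulVec (xhat + s.1) + s.2.2.1) j)) := by
    intro i j
    exact ((measurable_pi_apply i).comp measurable_fst).mul
      (((aux_meas_mulVec C (measurable_const.add measurable_fst)).add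
        (measurable_fst.comp (measurable_snd.comp measurable_snd))).eval)
  have hψB : ∀ (i : Fin n) (j : Fin m),
      Measurable (fun s : (Fin n → ℝ) × ((Fin n → ℝ) × ((Fin m → ℝ) × (Fin m → ℝ))) =>
        s.1 i * ((θ.mulVec (xhat + s.1 - s.2.1) + s.2.2.2) j)) := by
    intro i j
    exact ((measurable_pi_apply i).comp measurable_fst).mul
      (((aux_meas_mulVec θ ((measurable_const.add measurable_fst).sub
        (measurable_fst.comp measurable_snd))).add
        (measurable_snd.comp (measurable_snd.comp measurable_snd))).eval)
  -- independence of bounded functions of β with these products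
  have hIndA : ∀ (g : ℝ → ℝ), Measurable g → ∀ (i : Fin n) (j : Fin m),
      IndepFun (fun ω => g (β ω))
        (fun ω => e ω i * ((C.mulVec (xhat + e ω) + v ω) j)) P := by
    intro g hg i j
    exact hindep.comp hg (hψA i j)
  have hIndB : ∀ (g : ℝ → ℝ), Measurable g → ∀ (i : Fin n) (j : Fin m),
      IndepFun (fun ω => g (β ω))
        (fun ω => e ω i * ((θ.mulVec (xhat + e ω - w ω) + vm ω) j)) P := by
    intro g hg i j
    exact hindep.comp hg (hψB i j)
  -- values of the two pure integrals
  have hFA : ∀ (i : Fin n) (j : Fin m),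
      ∫ ω, e ω i * ((C.mulVec (xhat + e ω) + v ω) j) ∂P = (Sig * Cᵀ) i j := by
    intro i j
    have hfun : (fun ω => e ω i * ((C.mulVec (xhat + e ω) + v ω) j))
        = fun ω => (e ω i * C.mulVec xhat j + (∑ k, C j k * (e ω i * e ω k)))
            + e ω i * v ω j := by
      funext ω
      have h1 : C.mulVec (e ω) j = ∑ k, C j k * e ω k := rfl
      have h2 : e ω i * (∑ k, C j k * e ω k) = ∑ k, C j k * (e ω i * e ω k) := by
        rw [Finset.mul_sum]; exact Finset.sum_congr rfl fun k _ => by ring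
      simp only [Matrix.mulVec_add, Pi.add_apply, h1, mul_add, h2]
    have i1 : Integrable (fun ω => e ω i * C.mulVec xhat j) P :=
      ((aux_proj he2 i).integrable one_le_two).mul_const _
    have i2 : Integrable (fun ω => ∑ k, C j k * (e ω i * e ω k)) P :=
      integrable_finset_sum _ fun k _ =>
        (aux_mul_int (aux_proj he2 i) (aux_proj he2 k)).const_mul _
    have i12 : Integrable (fun ω => e ω i * C.mulVec xhat j
        + ∑ k, C j k * (e ω i * e ω k)) P := i1.add i2
    have i3 : Integrable (fun ω => e ω i * v ω j) P :=
      aux_mul_int (aux_proj he2 i) (aux_proj hv2 j)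
    rw [hfun, integral_add i12 i3, integral_add i1 i2,
      integral_finset_sum _ (fun k _ =>
        (aux_mul_int (aux_proj he2 i) (aux_proj he2 k)).const_mul _)]
    simp only [integral_mul_const, heiE i, zero_mul, integral_const_mul, hSigE, hevE i j,
      add_zero, zero_add]
    rw [Matrix.mul_apply]
    exact Finset.sum_congr rfl fun k _ => by rw [Matrix.transpose_apply]; ring
  have hFB : ∀ (i : Fin n) (j : Fin m),
      ∫ ω, e ω i * ((θ.mulVec (xhat + e ω - w ω) + vm ω) j) ∂P
        = (Sig * θᵀ) i j - (Q * θᵀ) i j := by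
    intro i j
    have hfun : (fun ω => e ω i * ((θ.mulVec (xhat + e ω - w ω) + vm ω) j))
        = fun ω => (e ω i * θ.mulVec xhat j
            + ((∑ k, θ j k * (e ω i * e ω k)) - ∑ k, θ j k * (e ω i * w ω k)))
            + e ω i * vm ω j := by
      funext ω
      have h1 : θ.mulVec (e ω) j = ∑ k, θ j k * e ω k := rfl
      have h1' : θ.mulVec (w ω) j = ∑ k, θ j k * w ω k := rfl
      have h2 : e ω i * (∑ k, θ j k * e ω k) = ∑ k, θ j k * (e ω i * e ω k) := by
        rw [Finset.mul_sum]; exact Finset.sum_congr rfl fun k _ => by ring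
      have h2' : e ω i * (∑ k, θ j k * w ω k) = ∑ k, θ j k * (e ω i * w ω k) := by
        rw [Finset.mul_sum]; exact Finset.sum_congr rfl fun k _ => by ring
      simp only [Matrix.mulVec_add, Matrix.mulVec_sub, Pi.add_apply, Pi.sub_apply, h1, h1',
        mul_add, mul_sub, h2, h2']
      ring
    have i1 : Integrable (fun ω => e ω i * θ.mulVec xhat j) P :=
      ((aux_proj he2 i).integrable one_le_two).mul_const _
    have i2 : Integrable (fun ω => ∑ k, θ j k * (e ω i * e ω k)) P :=
      integrable_finset_sum _ fun k _ =>
        (aux_mul_int (aux_proj he2 i) (aux_proj he2 k)).const_mul _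
    have i2' : Integrable (fun ω => ∑ k, θ j k * (e ω i * w ω k)) P :=
      integrable_finset_sum _ fun k _ =>
        (aux_mul_int (aux_proj he2 i) (aux_proj hw2 k)).const_mul _
    have i22 : Integrable (fun ω => (∑ k, θ j k * (e ω i * e ω k))
        - ∑ k, θ j k * (e ω i * w ω k)) P := i2.sub i2'
    have i12 : Integrable (fun ω => e ω i * θ.mulVec xhat j
        + ((∑ k, θ j k * (e ω i * e ω k)) - ∑ k, θ j k * (e ω i * w ω k))) P := i1.add i22
    have i3 : Integrable (fun ω => e ω i * vm ω j) P :=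
      aux_mul_int (aux_proj he2 i) (aux_proj hvm2 j)
    rw [hfun, integral_add i12 i3, integral_add i1 i22, integral_sub i2 i2',
      integral_finset_sum _ (fun k _ =>
        (aux_mul_int (aux_proj he2 i) (aux_proj he2 k)).const_mul _),
      integral_finset_sum _ (fun k _ =>
        (aux_mul_int (aux_proj he2 i) (aux_proj hw2 k)).const_mul _)]
    simp only [integral_mul_const, heiE i, zero_mul, integral_const_mul, hSigE, hQE,
      hevmE i j, add_zero, zero_add]
    rw [Matrix.mul_apply, Matrix.mul_apply]
    congr 1 <;> exact Finset.sum_congr rfl fun k _ => by rw [Matrix.transpose_apply]; ring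
  set Y : Ω → Fin m → ℝ := fun ω => (1 - β ω) • (C.mulVec (xhat + e ω) + v ω)
      + β ω • (θ.mulVec (xhat + e ω - w ω) + vm ω) with hYdef
  have hYsplit : ∀ (i : Fin n) (j : Fin m), (fun ω => e ω i * Y ω j)
      = fun ω => (1 - β ω) * (e ω i * ((C.mulVec (xhat + e ω) + v ω) j))
          + β ω * (e ω i * ((θ.mulVec (xhat + e ω - w ω) + vm ω) j)) := by
    intro i j
    funext ω
    rw [hYdef]
    simp only [Pi.add_apply, Pi.smul_apply, smul_eq_mul]
    ring
  have hIY : ∀ (i : Fin n) (j : Fin m), Integrable (fun ω => e ω i * Y ω j) P := by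
    intro i j
    rw [hYsplit i j]
    have i1 : Integrable (fun ω => (1 - β ω)
        * (e ω i * ((C.mulVec (xhat + e ω) + v ω) j))) P :=
      (aux_mul_int (aux_proj he2 i) (hA2 j)).bdd_mul
        ((measurable_const.sub hβmeas).aestronglyMeasurable) (Filter.Eventually.of_forall h1βbd)
    have i2 : Integrable (fun ω => β ω
        * (e ω i * ((θ.mulVec (xhat + e ω - w ω) + vm ω) j))) P :=
      (aux_mul_int (aux_proj he2 i) (hB2 j)).bdd_mul
        hβmeas.aestronglyMeasurable (Filter.Eventually.of_forall hβbd)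
    exact i1.add i2
  have hKey : ∀ (i : Fin n) (j : Fin m), ∫ ω, e ω i * Y ω j ∂P
      = (1 - α) * (Sig * Cᵀ) i j + α * ((Sig * θᵀ) i j - (Q * θᵀ) i j) := by
    intro i j
    have i1 : Integrable (fun ω => (1 - β ω)
        * (e ω i * ((C.mulVec (xhat + e ω) + v ω) j))) P :=
      (aux_mul_int (aux_proj he2 i) (hA2 j)).bdd_mul
        ((measurable_const.sub hβmeas).aestronglyMeasurable) (Filter.Eventually.of_forall h1βbd)
    have i2 : Integrable (fun ω => β ω
        * (e ω i * ((θ.mulVec (xhat + e ω - w ω) + vm ω) j))) P :=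
      (aux_mul_int (aux_proj he2 i) (hB2 j)).bdd_mul
        hβmeas.aestronglyMeasurable (Filter.Eventually.of_forall hβbd)
    have e1 : ∫ ω, (1 - β ω) * (e ω i * ((C.mulVec (xhat + e ω) + v ω) j)) ∂P
        = (1 - α) * (Sig * Cᵀ) i j := by
      have hI := (hIndA (fun t => 1 - t) (measurable_const.sub measurable_id) i j).integral_fun_mul_eq_mul_integral
        ((measurable_const.sub hβmeas).aestronglyMeasurable)
        (((hψA i j).comp hT).aestronglyMeasurable)
      rw [h1βE, hFA i j] at hI
      exact hI
    have e2 : ∫ ω, β ω * (e ω i * ((θ.mulVec (xhat + e ω - w ω) + vm ω) j)) ∂P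
        = α * ((Sig * θᵀ) i j - (Q * θᵀ) i j) := by
      have hI := (hIndB (fun t => t) measurable_id i j).integral_fun_mul_eq_mul_integral
        hβmeas.aestronglyMeasurable
        (((hψB i j).comp hT).aestronglyMeasurable)
      rw [hβE, hFB i j] at hI
      exact hI
    rw [hYsplit i j, integral_add i1 i2, e1, e2]
  have hRHS : Sig * ((1 - α) • C + α • θ)ᵀ = (1 - α) • (Sig * Cᵀ) + α • (Sig * θᵀ) := by
    rw [Matrix.transpose_add, Matrix.transpose_smul, Matrix.transpose_smul, Matrix.mul_add,
      Matrix.mul_smul, Matrix.mul_smul]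
  ext i j
  show (∫ ω, (xhat + e ω - xhat) i * ((Y ω - ∫ ω', Y ω' ∂P) j) ∂P)
      = (Sig * ((1 - α) • C + α • θ)ᵀ - α • (Q * θᵀ)) i j
  have hptw : (fun ω => (xhat + e ω - xhat) i * ((Y ω - ∫ ω', Y ω' ∂P) j))
      = fun ω => e ω i * Y ω j - e ω i * ((∫ ω', Y ω' ∂P) j) := by
    funext ω
    simp only [Pi.sub_apply, Pi.add_apply, add_sub_cancel_left]
    ring
  rw [hptw, integral_sub (hIY i j)
      (((aux_proj he2 i).integrable one_le_two).mul_const _),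
    integral_mul_const, heiE i, zero_mul, sub_zero, hKey i j, hRHS]
  simp only [Matrix.sub_apply, Matrix.add_apply, Matrix.smul_apply, smul_eq_mul]
  ring
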